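/- For all integers I ≥ 1 and S ≥ 1 such that I ≤ S or I + S is even, Σ_{j=L}^{⌊I/2⌋} (∏_{k=0}^{I−j−1} 1/(I+S−1−2k)) · ((1/j!)·∏_{k=1}^{j} C(I−2(k−1),2)) · (S! / (S−I+2j)!) = 1, where L = (I−S)/2 if I > S and L = 0 otherwise. -/

import Mathlib

open Nat Finset

def TT (I S j : ℕ) : ℚ :=
  (∏ k ∈ Finset.range (I - j), (1 / ((I : ℚ) + (S : ℚ) - 1 - 2 * (k : ℚ)))) *
    ((1 / (j ! : ℚ)) * ∏ k ∈ Finset.range j, ((I - 2 * k).choose 2 : ℚ)) *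
    ((S ! : ℚ) / ((S + 2 * j - I) ! : ℚ))

lemma prod_inv_shift (y : ℚ) (m : ℕ) (hm : 1 ≤ m) :
    ∏ k ∈ range m, (1 / (y - 2 * (k:ℚ))) =
      (1 / y) * ∏ k ∈ range (m - 1), (1 / (y - 2 - 2 * (k:ℚ))) := by
  obtain ⟨m', rfl⟩ : ∃ m', m = m' + 1 := ⟨m - 1, by omega⟩
  rw [Finset.prod_range_succ']
  simp only [Nat.add_sub_cancel, Nat.cast_zero, Nat.cast_add, Nat.cast_one]
  rw [mul_comm]
  congr 1
  · ring_nf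
  · exact Finset.prod_congr rfl fun k _ => by ring_nf

lemma prodB (x : ℚ) (j : ℕ) (hj : 1 ≤ j) :
    ∏ k ∈ range j, ((x - 2*(k:ℚ)) * (x - 2*(k:ℚ) - 1) / 2) =
      x * (x - (2*(j:ℚ) - 1)) / 2 *
        ∏ k ∈ range (j-1), ((x - 1 - 2*(k:ℚ)) * (x - 2 - 2*(k:ℚ)) / 2) := by
  obtain ⟨j', rfl⟩ : ∃ j', j = j' + 1 := ⟨j - 1, by omega⟩
  simp only [Nat.add_sub_cancel]
  have split : ∀ (a b : ℕ → ℚ) (m : ℕ),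
      ∏ k ∈ range m, (a k * b k / 2) =
        (∏ k ∈ range m, a k) * (∏ k ∈ range m, b k) * (2⁻¹) ^ m := by
    intro a b m
    rw [show ((2⁻¹:ℚ))^m = ∏ _k ∈ range m, (2⁻¹:ℚ) by simp, ← Finset.prod_mul_distrib,
      ← Finset.prod_mul_distrib]
    exact Finset.prod_congr rfl fun k _ => by ring
  rw [split (fun k => x - 2*(k:ℚ)) (fun k => x - 2*(k:ℚ) - 1),
      split (fun k => x - 1 - 2*(k:ℚ)) (fun k => x - 2 - 2*(k:ℚ))]
  rw [Finset.prod_range_succ' (fun k => x - 2*(k:ℚ)), Finset.prod_range_succ]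
  have e1 : ∏ k ∈ range j', (x - 2*((k:ℚ)+1)) = ∏ k ∈ range j', (x - 2 - 2*(k:ℚ)) :=
    Finset.prod_congr rfl fun k _ => by push_cast; ring
  have e2 : ∏ k ∈ range j', (x - 2*(k:ℚ) - 1) = ∏ k ∈ range j', (x - 1 - 2*(k:ℚ)) :=
    Finset.prod_congr rfl fun k _ => by ring
  push_cast
  rw [e1, e2]
  ring

lemma term_rec (I S j : ℕ) (hI : 2 ≤ I) (hS : 1 ≤ S) (hj : 1 ≤ j)
    (hjI : 2*j ≤ I) (hSI : I ≤ S + 2*j) :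
    TT I S j = ((I:ℚ)-1)/((I:ℚ)+(S:ℚ)-1) * TT (I-2) S (j-1)
      + (S:ℚ)/((I:ℚ)+(S:ℚ)-1) * TT (I-1) (S-1) j := by
  simp only [TT]
  -- normalize nat index arithmetic
  rw [show I - 2 - (j-1) = I - j - 1 by omega, show I - 1 - j = I - j - 1 by omega,
      show S + 2*(j-1) - (I-2) = S + 2*j - I by omega,
      show S - 1 + 2*j - (I-1) = S + 2*j - I by omega]
  set Q : ℚ := ∏ k ∈ range (I - j - 1), (1 / ((I:ℚ) + (S:ℚ) - 1 - 2 - 2 * (k:ℚ))) with hQdef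
  have hD : ∏ k ∈ range (I - j), (1 / ((I:ℚ) + (S:ℚ) - 1 - 2 * (k:ℚ)))
      = (1 / ((I:ℚ)+(S:ℚ)-1)) * Q := prod_inv_shift _ _ (by omega)
  have hD2 : ∏ k ∈ range (I - j - 1), (1 / (((I-2:ℕ):ℚ) + (S:ℚ) - 1 - 2 * (k:ℚ))) = Q :=
    Finset.prod_congr rfl fun k _ => by
      congr 1
      rw [Nat.cast_sub hI]; push_cast; ring
  have hD3 : ∏ k ∈ range (I - j - 1), (1 / (((I-1:ℕ):ℚ) + ((S-1:ℕ):ℚ) - 1 - 2 * (k:ℚ))) = Q :=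
    Finset.prod_congr rfl fun k _ => by
      congr 1
      rw [Nat.cast_sub (by omega : 1 ≤ I), Nat.cast_sub hS]; push_cast; ring
  set R : ℚ := ∏ k ∈ range (j-1), (((I - 2 - 2*k).choose 2 : ℚ)) with hRdef
  have hA : ∏ k ∈ range j, (((I - 2*k).choose 2 : ℚ)) = ((I.choose 2 : ℚ)) * R := by
    obtain ⟨j', rfl⟩ : ∃ j', j = j' + 1 := ⟨j - 1, by omega⟩
    rw [Finset.prod_range_succ']
    simp only [Nat.add_sub_cancel, Nat.mul_zero, Nat.sub_zero, hRdef]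
    rw [mul_comm]
    congr 1
    exact Finset.prod_congr rfl fun k _ => by congr 2; omega
  have hR' : R = ∏ k ∈ range (j-1),
      (((I:ℚ)-1) - 1 - 2*(k:ℚ)) * (((I:ℚ)-1) - 2 - 2*(k:ℚ)) / 2 := by
    refine Finset.prod_congr rfl fun k hk => ?_
    have hk' : k < j - 1 := Finset.mem_range.mp hk
    rw [show I - 2 - 2*k = I - (2 + 2*k) by omega, Nat.cast_choose_two,
        Nat.cast_sub (by omega : 2 + 2*k ≤ I)]
    push_cast; ring
  have hB : ∏ k ∈ range j, (((I - 1 - 2*k).choose 2 : ℚ))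
      = ((I:ℚ)-1) * ((I:ℚ) - 2*(j:ℚ)) / 2 * R := by
    have step1 : ∏ k ∈ range j, (((I - 1 - 2*k).choose 2 : ℚ))
        = ∏ k ∈ range j, ((((I:ℚ)-1) - 2*(k:ℚ)) * (((I:ℚ)-1) - 2*(k:ℚ) - 1) / 2) := by
      refine Finset.prod_congr rfl fun k hk => ?_
      have hk' : k < j := Finset.mem_range.mp hk
      rw [show I - 1 - 2*k = I - (1 + 2*k) by omega, Nat.cast_choose_two,
          Nat.cast_sub (by omega : 1 + 2*k ≤ I)]
      push_cast; ring
    rw [step1, prodB _ _ hj, hR']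
    ring
  have hjf : (j ! : ℚ) = (j:ℚ) * (((j-1)! : ℕ) : ℚ) := by
    rw [← Nat.mul_factorial_pred (by omega : j ≠ 0)]; push_cast; ring
  have hSf : (S ! : ℚ) = (S:ℚ) * (((S-1)! : ℕ) : ℚ) := by
    rw [← Nat.mul_factorial_pred (by omega : S ≠ 0)]; push_cast; ring
  rw [hD, hD2, hD3, hA, hB, hjf, hSf, Nat.cast_choose_two]
  have hn1 : ((I:ℚ)+(S:ℚ)-1) ≠ 0 := by
    have : (3:ℚ) ≤ (I:ℚ)+(S:ℚ) := by exact_mod_cast (by omega : 3 ≤ I + S)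
    intro hc; nlinarith
  have hjQ : ((j:ℚ)) ≠ 0 := Nat.cast_ne_zero.mpr (by omega)
  have hjfQ : (((j-1)! : ℕ) : ℚ) ≠ 0 := Nat.cast_ne_zero.mpr (Nat.factorial_ne_zero _)
  have hcfQ : (((S + 2*j - I)! : ℕ) : ℚ) ≠ 0 := Nat.cast_ne_zero.mpr (Nat.factorial_ne_zero _)
  field_simp
  ring

lemma TT_zero (I S j : ℕ) (h : I < 2*j) : TT I S j = 0 := by
  have hj : j - 1 ∈ range j := by simp; omega
  have : ((I - 2*(j-1)).choose 2 : ℚ) = 0 := by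
    rw [Nat.choose_eq_zero_of_lt (by omega)]; simp
  simp only [TT]
  rw [Finset.prod_eq_zero hj this]
  ring

lemma term_rec0 (I S : ℕ) (hI : 2 ≤ I) (hIS : I ≤ S) :
    TT I S 0 = (S:ℚ)/((I:ℚ)+(S:ℚ)-1) * TT (I-1) (S-1) 0 := by
  simp only [TT]
  rw [show S - 1 + 2*0 - (I-1) = S + 2*0 - I by omega, show I - 1 - 0 = I - 0 - 1 by omega]
  have hD : ∏ k ∈ range (I - 0), (1 / ((I:ℚ) + (S:ℚ) - 1 - 2 * (k:ℚ)))
      = (1 / ((I:ℚ)+(S:ℚ)-1)) * ∏ k ∈ range (I - 0 - 1), (1 / ((I:ℚ)+(S:ℚ)-1 - 2 - 2*(k:ℚ))) :=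
    prod_inv_shift _ _ (by omega)
  have hD3 : ∏ k ∈ range (I - 0 - 1), (1 / (((I-1:ℕ):ℚ) + ((S-1:ℕ):ℚ) - 1 - 2 * (k:ℚ)))
      = ∏ k ∈ range (I - 0 - 1), (1 / ((I:ℚ)+(S:ℚ)-1 - 2 - 2*(k:ℚ))) :=
    Finset.prod_congr rfl fun k _ => by
      congr 1
      rw [Nat.cast_sub (by omega : 1 ≤ I), Nat.cast_sub (by omega : 1 ≤ S)]; push_cast; ring
  have hSf : (S ! : ℚ) = (S:ℚ) * (((S-1)! : ℕ) : ℚ) := by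
    rw [← Nat.mul_factorial_pred (by omega : S ≠ 0)]; push_cast; ring
  rw [hD, hD3, hSf]
  have hn1 : ((I:ℚ)+(S:ℚ)-1) ≠ 0 := by
    have : (3:ℚ) ≤ (I:ℚ)+(S:ℚ) := by exact_mod_cast (by omega : (3:ℕ) ≤ I + S)
    intro hc; nlinarith
  field_simp
  ring

lemma FF_zero (S : ℕ) : (∑ j ∈ Finset.Icc (if S < 0 then (0 - S) / 2 else 0) (0 / 2), TT 0 S j) = 1 := by
  simp [TT, Nat.factorial_ne_zero]

lemma FF_one (S : ℕ) (hS : 1 ≤ S) :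
    (∑ j ∈ Finset.Icc (if S < 1 then (1 - S) / 2 else 0) (1 / 2), TT 1 S j) = 1 := by
  rw [if_neg (by omega)]
  have : Finset.Icc 0 (1/2) = {0} := by rfl
  rw [this, Finset.sum_singleton]
  simp only [TT]
  rw [show S + 2*0 - 1 = S - 1 by omega]
  have hSf : (S ! : ℚ) = (S:ℚ) * (((S-1)! : ℕ) : ℚ) := by
    rw [← Nat.mul_factorial_pred (by omega : S ≠ 0)]; push_cast; ring
  have hS0 : (S:ℚ) ≠ 0 := Nat.cast_ne_zero.mpr (by omega)
  have hSfQ : (((S-1)! : ℕ) : ℚ) ≠ 0 := Nat.cast_ne_zero.mpr (Nat.factorial_ne_zero _)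
  rw [hSf]
  simp
  field_simp

lemma FF_S0 (I : ℕ) (hI : 1 ≤ I) (hE : Even I) :
    (∑ j ∈ Finset.Icc (if 0 < I then (I - 0) / 2 else 0) (I / 2), TT I 0 j) = 1 := by
  obtain ⟨m, rfl⟩ : ∃ m, I = 2*m := by obtain ⟨m, hm⟩ := hE; exact ⟨m, by omega⟩
  have hm : 1 ≤ m := by omega
  rw [if_pos (by omega), Nat.sub_zero, show (2*m)/2 = m by omega, Finset.Icc_self,
    Finset.sum_singleton]
  simp only [TT]
  rw [show 2*m - m = m by omega, show 0 + 2*m - 2*m = 0 by omega]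
  have hP : ∀ k ∈ range m, ((2*m:ℕ):ℚ) + (0:ℕ) - 1 - 2*(k:ℚ) = ((2*m - 1 - 2*k : ℕ):ℚ) := by
    intro k hk
    have hk' : k < m := Finset.mem_range.mp hk
    rw [Nat.cast_sub (by omega), Nat.cast_sub (by omega)]
    push_cast; ring
  have h1 : ∏ k ∈ range m, ((2*m - 2*k).choose 2 : ℚ)
      = ∏ k ∈ range m, (((m-k:ℕ):ℚ) * ((2*m - 1 - 2*k : ℕ):ℚ)) := by
    refine Finset.prod_congr rfl fun k hk => ?_
    have hk' : k < m := Finset.mem_range.mp hk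
    rw [Nat.cast_choose_two, Nat.cast_sub (by omega : 2*k ≤ 2*m),
      Nat.cast_sub (by omega : k ≤ m), Nat.cast_sub (by omega : 2*k ≤ 2*m - 1),
      Nat.cast_sub (by omega : 1 ≤ 2*m)]
    push_cast; ring
  have h3 : ∏ k ∈ range m, ((m-k:ℕ):ℚ) = (m ! : ℚ) := by
    rw [← Nat.cast_prod]
    congr 1
    calc ∏ k ∈ range m, (m-k) = ∏ k ∈ range m, ((m-1-k)+1) :=
          Finset.prod_congr rfl fun k hk => by
            have := Finset.mem_range.mp hk; omega
      _ = ∏ k ∈ range m, (k+1) := Finset.prod_range_reflect (·+1) m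
      _ = m ! := Finset.prod_range_add_one_eq_factorial m
  have h4 : ∏ k ∈ range m, (1 / (((2*m:ℕ):ℚ) + ((0:ℕ):ℚ) - 1 - 2*(k:ℚ)))
      = 1 / ∏ k ∈ range m, ((2*m - 1 - 2*k : ℕ):ℚ) := by
    rw [Finset.prod_congr rfl (fun k hk => by rw [hP k hk] :
      ∀ k ∈ range m, (1 / (((2*m:ℕ):ℚ) + ((0:ℕ):ℚ) - 1 - 2*(k:ℚ)))
        = 1 / ((2*m - 1 - 2*k : ℕ):ℚ)),
      Finset.prod_div_distrib, Finset.prod_const_one]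
  have hPne : (∏ k ∈ range m, ((2*m - 1 - 2*k : ℕ):ℚ)) ≠ 0 :=
    Finset.prod_ne_zero_iff.mpr fun k hk => by
      have := Finset.mem_range.mp hk
      exact Nat.cast_ne_zero.mpr (by omega)
  rw [h1, Finset.prod_mul_distrib, h3, h4]
  have hmf : (m ! : ℚ) ≠ 0 := Nat.cast_ne_zero.mpr (Nat.factorial_ne_zero _)
  field_simp

lemma main : ∀ I S : ℕ, (I ≤ S ∨ Even (I + S)) →
    (∑ j ∈ Finset.Icc (if S < I then (I - S) / 2 else 0) (I / 2), TT I S j) = 1 := by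
  intro I
  induction I using Nat.strong_induction_on with
  | _ I IH =>
  intro S h
  by_cases hI0 : I = 0
  · subst hI0; exact FF_zero S
  by_cases hI1 : I = 1
  · subst hI1
    have hS : 1 ≤ S := by rcases h with h | ⟨c, hc⟩ <;> omega
    exact FF_one S hS
  have hI : 2 ≤ I := by omega
  by_cases hS0 : S = 0
  · subst hS0
    have hE : Even I := by
      rcases h with h | h
      · omega
      · simpa using h
    exact FF_S0 I (by omega) hE
  have hS : 1 ≤ S := by omega
  have hM1 : 1 ≤ I / 2 := by omega
  set M := I / 2 with hM
  have hn1 : ((I:ℚ)+(S:ℚ)-1) ≠ 0 := by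
    have : (3:ℚ) ≤ (I:ℚ)+(S:ℚ) := by exact_mod_cast (by omega : (3:ℕ) ≤ I + S)
    intro hcon; nlinarith
  by_cases hc : S < I
  · -- Case B : S < I, so I + S even
    have hEv : Even (I + S) := by
      rcases h with h | h
      · omega
      · exact h
    obtain ⟨e, he⟩ := hEv
    set d := (I - S)/2 with hdd
    have hd : 1 ≤ d := by omega
    have hdM : d ≤ M := by omega
    rw [if_pos hc]
    have hrec : ∀ j ∈ Finset.Icc d M, TT I S j =
        ((I:ℚ)-1)/((I:ℚ)+(S:ℚ)-1) * TT (I-2) S (j-1)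
          + (S:ℚ)/((I:ℚ)+(S:ℚ)-1) * TT (I-1) (S-1) j := by
      intro j hj
      obtain ⟨hj1, hj2⟩ := Finset.mem_Icc.mp hj
      exact term_rec I S j hI hS (by omega) (by omega) (by omega)
    rw [Finset.sum_congr rfl hrec, Finset.sum_add_distrib, ← Finset.mul_sum, ← Finset.mul_sum]
    have hS1 : ∑ j ∈ Finset.Icc d M, TT (I-2) S (j-1)
        = ∑ j ∈ Finset.Icc (if S < I - 2 then (I - 2 - S)/2 else 0) ((I-2)/2), TT (I-2) S j := by
      have e1 : (if S < I - 2 then (I - 2 - S)/2 else 0) = d - 1 := by split <;> omega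
      have e2 : (I-2)/2 = M - 1 := by omega
      rw [e1, e2]
      simp only [← Finset.Ico_add_one_right_eq_Icc]
      rw [Finset.sum_Ico_eq_sum_range, Finset.sum_Ico_eq_sum_range]
      refine Finset.sum_congr (by congr 1; omega) fun k _ => by congr 1; omega
    have hS2 : ∑ j ∈ Finset.Icc d M, TT (I-1) (S-1) j
        = ∑ j ∈ Finset.Icc (if S - 1 < I - 1 then (I - 1 - (S-1))/2 else 0) ((I-1)/2),
            TT (I-1) (S-1) j := by
      have e1 : (if S - 1 < I - 1 then (I - 1 - (S-1))/2 else 0) = d := by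
        rw [if_pos (by omega)]; omega
      rw [e1]
      rcases Nat.even_or_odd I with hIe | hIo
      · obtain ⟨c, hc2⟩ := hIe
        have e2 : (I-1)/2 = M - 1 := by omega
        rw [e2, show M = (M-1) + 1 by omega, Finset.sum_Icc_succ_top (by omega),
          TT_zero _ _ _ (by omega), add_zero, Nat.add_sub_cancel]
      · obtain ⟨c, hc2⟩ := hIo
        have e2 : (I-1)/2 = M := by omega
        rw [e2]
    rw [hS1, hS2, IH (I-2) (by omega) S (Or.inr ⟨e - 1, by omega⟩),
      IH (I-1) (by omega) (S-1) (Or.inr ⟨e - 1, by omega⟩), mul_one, mul_one,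
      ← add_div, div_eq_one_iff_eq hn1]
    ring
  · -- Case A : I ≤ S
    have hIS : I ≤ S := by omega
    rw [if_neg hc, show Finset.Icc 0 M = Finset.range (M+1) by ext x; simp [Nat.lt_succ_iff],
      Finset.sum_range_succ']
    have hrec : ∀ j ∈ Finset.range M, TT I S (j+1) =
        ((I:ℚ)-1)/((I:ℚ)+(S:ℚ)-1) * TT (I-2) S j
          + (S:ℚ)/((I:ℚ)+(S:ℚ)-1) * TT (I-1) (S-1) (j+1) := by
      intro j hj
      have hj' : j < M := Finset.mem_range.mp hj
      have := term_rec I S (j+1) hI hS (by omega) (by omega) (by omega)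
      simpa using this
    rw [Finset.sum_congr rfl hrec, Finset.sum_add_distrib, ← Finset.mul_sum, ← Finset.mul_sum,
      term_rec0 I S hI hIS,
      show ∀ a b t c1 c2 : ℚ, c1*a + c2*b + c2*t = c1*a + c2*(b+t) from fun _ _ _ _ _ => by ring,
      ← Finset.sum_range_succ']
    have hS1 : ∑ j ∈ Finset.range M, TT (I-2) S j
        = ∑ j ∈ Finset.Icc (if S < I - 2 then (I - 2 - S)/2 else 0) ((I-2)/2), TT (I-2) S j := by
      rw [if_neg (by omega), show (I-2)/2 = M - 1 by omega]
      congr 1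
      ext x
      simp only [Finset.mem_range, Finset.mem_Icc]
      omega
    have hS2 : ∑ j ∈ Finset.range (M+1), TT (I-1) (S-1) j
        = ∑ j ∈ Finset.Icc (if S - 1 < I - 1 then (I - 1 - (S-1))/2 else 0) ((I-1)/2),
            TT (I-1) (S-1) j := by
      rw [if_neg (by omega)]
      rcases Nat.even_or_odd I with hIe | hIo
      · obtain ⟨c, hc2⟩ := hIe
        rw [show (I-1)/2 = M - 1 by omega, Finset.sum_range_succ, TT_zero _ _ _ (by omega),
          add_zero]
        congr 1
        ext x
        simp only [Finset.mem_range, Finset.mem_Icc]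
        omega
      · obtain ⟨c, hc2⟩ := hIo
        rw [show (I-1)/2 = M by omega]
        congr 1
        ext x
        simp only [Finset.mem_range, Finset.mem_Icc]
        omega
    rw [hS1, hS2, IH (I-2) (by omega) S (Or.inl (by omega)),
      IH (I-1) (by omega) (S-1) (Or.inl (by omega)), mul_one, mul_one,
      ← add_div, div_eq_one_iff_eq hn1]
    ring

open Nat in
/-- The probabilities of all possible wirings, classified by the number `j` of
pairings between two infected mobiles, sum to one. -/
theorem stmt_9 (I S : ℕ) (hI : 1 ≤ I) (hS : 1 ≤ S) (h : I ≤ S ∨ Even (I + S)) :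
    ∑ j ∈ Finset.Icc (if S < I then (I - S) / 2 else 0) (I / 2),
      (∏ k ∈ Finset.range (I - j), (1 / ((I : ℚ) + (S : ℚ) - 1 - 2 * (k : ℚ)))) *
        ((1 / (j ! : ℚ)) * ∏ k ∈ Finset.range j, ((I - 2 * k).choose 2 : ℚ)) *
        ((S ! : ℚ) / ((S + 2 * j - I) ! : ℚ)) = 1 := by
  simpa [TT] using main I S h
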